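/- The family {T_{μ√r,t} : r > 0} satisfies the large deviation principle with speed r and good rate function J(b) = μ²b/2 for b ∈ [0,t] and J(b) = ∞ otherwise: for every closed set C ⊆ ℝ, limsup_{r→∞} (1/r) log P(T_{μ√r,t} ∈ C) ≤ -inf_{b∈C} J(b), and for every open set G, liminf_{r→∞} (1/r) log P(T_{μ√r,t} ∈ G) ≥ -inf_{b∈G} J(b). -/

import Mathlib

set_option maxHeartbeats 1000000

open Real Filter MeasureTheory

/-- Extended-real logarithm of a probability value, sending `0` to `⊥`. -/
noncomputable def eLogProb (x : ENNReal) : EReal :=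
  if x = 0 then ⊥ else ((Real.log x.toReal : ℝ) : EReal)

/-- The rate function `J(b) = μ²b/2` on `[0,t]`, `∞` outside. -/
noncomputable def rateJ (μ t b : ℝ) : EReal :=
  if b ∈ Set.Icc 0 t then ((μ ^ 2 * b / 2 : ℝ) : EReal) else ⊤

noncomputable def Ffun (μ t a r : ℝ) : ℝ :=
  1 - 2 / π * ∫ y in (0:ℝ)..Real.sqrt ((t - a) / a),
      Real.exp (-((μ * Real.sqrt r) ^ 2 / 2) * a * (1 + y ^ 2)) / (1 + y ^ 2)

-- from s1.lean

-- integrand: f c a y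
lemma contf (c a : ℝ) : Continuous (fun y : ℝ => Real.exp (-c * a * (1 + y ^ 2)) / (1 + y ^ 2)) := by
  apply Continuous.div (by continuity) (by continuity)
  intro y; positivity

lemma int_nonneg (c a L : ℝ) (hL : 0 ≤ L) :
    0 ≤ ∫ y in (0:ℝ)..L, Real.exp (-c * a * (1 + y ^ 2)) / (1 + y ^ 2) := by
  apply intervalIntegral.integral_nonneg hL
  intro y _; positivity

lemma int_upper (c a L : ℝ) (hca : 0 ≤ c * a) (hL : 0 ≤ L) :
    ∫ y in (0:ℝ)..L, Real.exp (-c * a * (1 + y ^ 2)) / (1 + y ^ 2)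
      ≤ π / 2 * Real.exp (-(c * a)) := by
  have h1 : ∫ y in (0:ℝ)..L, Real.exp (-c * a * (1 + y ^ 2)) / (1 + y ^ 2)
      ≤ ∫ y in (0:ℝ)..L, Real.exp (-(c * a)) * (1 / (1 + y ^ 2)) := by
    apply intervalIntegral.integral_mono_on hL
    · exact ((contf c a).intervalIntegrable _ _)
    · exact (Continuous.intervalIntegrable (by
        apply Continuous.mul continuous_const
        apply Continuous.div continuous_const (by continuity)
        intro y; positivity) _ _)
    · intro y hy
      rw [mul_one_div]
      apply div_le_div_of_nonneg_right ?_ (by positivity)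
      apply Real.exp_le_exp.2
      nlinarith [sq_nonneg y]
  have h2 : ∫ y in (0:ℝ)..L, Real.exp (-(c * a)) * (1 / (1 + y ^ 2))
      = Real.exp (-(c * a)) * Real.arctan L := by
    rw [intervalIntegral.integral_const_mul, integral_one_div_one_add_sq, Real.arctan_zero, sub_zero]
  calc _ ≤ Real.exp (-(c * a)) * Real.arctan L := h1.trans h2.le
    _ ≤ Real.exp (-(c * a)) * (π / 2) := by
        exact mul_le_mul_of_nonneg_left (Real.arctan_lt_pi_div_two L).le (Real.exp_pos _).le
    _ = _ := mul_comm _ _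

lemma int_lower (c a L m : ℝ) (hca : 0 ≤ c * a) (hm : 0 ≤ m) (hmL : m ≤ L) :
    m / (1 + m ^ 2) * Real.exp (-c * a * (1 + m ^ 2))
      ≤ ∫ y in (0:ℝ)..L, Real.exp (-c * a * (1 + y ^ 2)) / (1 + y ^ 2) := by
  have key : ∫ y in (0:ℝ)..m, Real.exp (-c * a * (1 + m ^ 2)) / (1 + m ^ 2)
      ≤ ∫ y in (0:ℝ)..m, Real.exp (-c * a * (1 + y ^ 2)) / (1 + y ^ 2) := by
    apply intervalIntegral.integral_mono_on hm
    · exact intervalIntegrable_const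
    · exact ((contf c a).intervalIntegrable _ _)
    · intro y hy
      apply div_le_div₀ (by positivity) ?_ (by positivity) ?_
      · apply Real.exp_le_exp.2
        have h1 : y ^ 2 ≤ m ^ 2 := by nlinarith [hy.1, hy.2]
        nlinarith [mul_nonneg hca (sub_nonneg.2 h1)]
      · nlinarith [hy.1, hy.2]
  have hsplit : ∫ y in (0:ℝ)..m, Real.exp (-c * a * (1 + y ^ 2)) / (1 + y ^ 2)
      ≤ ∫ y in (0:ℝ)..L, Real.exp (-c * a * (1 + y ^ 2)) / (1 + y ^ 2) := by
    apply intervalIntegral.integral_mono_interval le_rfl hm hmL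
    · filter_upwards with y; positivity
    · exact ((contf c a).intervalIntegrable _ _)
  have heq : ∫ y in (0:ℝ)..m, Real.exp (-c * a * (1 + m ^ 2)) / (1 + m ^ 2)
      = m * (Real.exp (-c * a * (1 + m ^ 2)) / (1 + m ^ 2)) := by
    rw [intervalIntegral.integral_const, smul_eq_mul, sub_zero]
  have hfin : m / (1 + m ^ 2) * Real.exp (-c * a * (1 + m ^ 2))
      = m * (Real.exp (-c * a * (1 + m ^ 2)) / (1 + m ^ 2)) := by ring
  rw [hfin, ← heq]
  exact key.trans hsplit

-- from s2.lean

lemma Ffun_le_one (μ t a r : ℝ) : Ffun μ t a r ≤ 1 := by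
  have h := int_nonneg ((μ * Real.sqrt r) ^ 2 / 2) a (Real.sqrt ((t - a) / a)) (Real.sqrt_nonneg _)
  have hπ := Real.pi_pos
  unfold Ffun
  have h2 : (0:ℝ) ≤ 2 / π := by positivity
  nlinarith [mul_nonneg h2 h]

lemma one_sub_Ffun_le (μ t a r : ℝ) (ha : 0 ≤ a) :
    1 - Ffun μ t a r ≤ Real.exp (-((μ * Real.sqrt r) ^ 2 / 2 * a)) := by
  have hca : 0 ≤ (μ * Real.sqrt r) ^ 2 / 2 * a := by positivity
  have h := int_upper ((μ * Real.sqrt r) ^ 2 / 2) a (Real.sqrt ((t - a) / a)) hca (Real.sqrt_nonneg _)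
  have hπ := Real.pi_pos
  have h2 : 2 / π * (π / 2 * Real.exp (-((μ * Real.sqrt r) ^ 2 / 2 * a)))
      = Real.exp (-((μ * Real.sqrt r) ^ 2 / 2 * a)) := by
    field_simp
  have h3 : (0:ℝ) ≤ 2 / π := by positivity
  have h4 := mul_le_mul_of_nonneg_left h h3
  unfold Ffun at *
  linarith

lemma Ffun_nonneg (μ t a r : ℝ) (ha : 0 ≤ a) : 0 ≤ Ffun μ t a r := by
  have h := one_sub_Ffun_le μ t a r ha
  have h2 : Real.exp (-((μ * Real.sqrt r) ^ 2 / 2 * a)) ≤ 1 :=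
    Real.exp_le_one_iff.2 (by positivity |> neg_nonpos_of_nonneg)
  linarith

lemma one_sub_Ffun_ge (μ t a r m : ℝ) (ha : 0 ≤ a) (hm : 0 ≤ m)
    (hmL : m ≤ Real.sqrt ((t - a) / a)) :
    2 / π * (m / (1 + m ^ 2) * Real.exp (-((μ * Real.sqrt r) ^ 2 / 2) * a * (1 + m ^ 2)))
      ≤ 1 - Ffun μ t a r := by
  have hca : 0 ≤ (μ * Real.sqrt r) ^ 2 / 2 * a := by positivity
  have h := int_lower ((μ * Real.sqrt r) ^ 2 / 2) a (Real.sqrt ((t - a) / a)) m hca hm hmL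
  have hπ := Real.pi_pos
  have h2 : (0:ℝ) ≤ 2 / π := by positivity
  have h3 := mul_le_mul_of_nonneg_left h h2
  unfold Ffun
  linarith

lemma sq_mul_sqrt (μ r : ℝ) (hr : 0 ≤ r) : (μ * Real.sqrt r) ^ 2 = μ ^ 2 * r := by
  rw [mul_pow, Real.sq_sqrt hr]

-- from s3.lean

lemma mul_eLog_le {r z : ℝ} (hr : 0 < r) {x : ENNReal} (hx : x ≤ ENNReal.ofReal (Real.exp z)) :
    ((1 / r : ℝ) : EReal) * eLogProb x ≤ ((z / r : ℝ) : EReal) := by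
  rcases eq_or_ne x 0 with h0 | h0
  · rw [h0]
    unfold eLogProb
    rw [if_pos rfl, EReal.coe_mul_bot_of_pos (by positivity)]
    exact bot_le
  · have hxt : x ≠ ⊤ := ne_top_of_le_ne_top ENNReal.ofReal_ne_top hx
    have hpos : 0 < x.toReal := ENNReal.toReal_pos h0 hxt
    have hle : x.toReal ≤ Real.exp z := by
      have h := ENNReal.toReal_mono ENNReal.ofReal_ne_top hx
      rwa [ENNReal.toReal_ofReal (Real.exp_pos z).le] at h
    unfold eLogProb
    rw [if_neg h0, ← EReal.coe_mul]
    apply EReal.coe_le_coe_iff.2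
    rw [one_div, inv_mul_eq_div]
    have hlog : Real.log x.toReal ≤ z := (Real.log_le_iff_le_exp hpos).2 hle
    exact div_le_div_of_nonneg_right hlog hr.le

lemma mul_eLog_ge {r z : ℝ} (hr : 0 < r) {x : ENNReal}
    (hx : ENNReal.ofReal (Real.exp z) ≤ x) (hxt : x ≠ ⊤) :
    ((z / r : ℝ) : EReal) ≤ ((1 / r : ℝ) : EReal) * eLogProb x := by
  have h0 : x ≠ 0 := ((ENNReal.ofReal_pos.2 (Real.exp_pos z)).trans_le hx).ne'
  have hge : Real.exp z ≤ x.toReal := by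
    have h := ENNReal.toReal_mono hxt hx
    rwa [ENNReal.toReal_ofReal (Real.exp_pos z).le] at h
  unfold eLogProb
  rw [if_neg h0, ← EReal.coe_mul]
  apply EReal.coe_le_coe_iff.2
  rw [one_div, inv_mul_eq_div]
  have hlog : z ≤ Real.log x.toReal := (Real.le_log_iff_exp_le ((Real.exp_pos z).trans_le hge)).2 hge
  exact div_le_div_of_nonneg_right hlog hr.le

lemma mul_eLog_nonpos {r : ℝ} (hr : 0 < r) {x : ENNReal} (hx : x ≤ 1) :
    ((1 / r : ℝ) : EReal) * eLogProb x ≤ (0 : EReal) := by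
  have hx' : x ≤ ENNReal.ofReal (Real.exp 0) := by
    rw [Real.exp_zero, ENNReal.ofReal_one]; exact hx
  have h := mul_eLog_le hr hx'
  rwa [zero_div, EReal.coe_zero] at h

-- from s5.lean

lemma compact_sublevel (μ t : ℝ) (hμ : μ ≠ 0) (ht : 0 < t) (η : ℝ) :
    IsCompact {b : ℝ | rateJ μ t b ≤ (η : EReal)} := by
  have hμ2 : 0 < μ ^ 2 := by positivity
  have hset : {b : ℝ | rateJ μ t b ≤ (η : EReal)}
      = Set.Icc 0 t ∩ Set.Iic (2 * η / μ ^ 2) := by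
    ext b
    simp only [Set.mem_setOf_eq, rateJ, Set.mem_inter_iff, Set.mem_Iic]
    constructor
    · intro h
      by_cases hb : b ∈ Set.Icc 0 t
      · rw [if_pos hb] at h
        have h2 := EReal.coe_le_coe_iff.1 h
        refine ⟨hb, ?_⟩
        rw [le_div_iff₀ hμ2]
        linarith
      · rw [if_neg hb] at h
        exact absurd h (by simp)
    · rintro ⟨hb, hb2⟩
      rw [if_pos hb]
      apply EReal.coe_le_coe_iff.2
      rw [le_div_iff₀ hμ2] at hb2
      linarith
  rw [hset]
  exact isCompact_Icc.inter_right isClosed_Iic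

lemma rateJ_iInf_empty {μ t : ℝ} {S : Set ℝ} (h : ∀ b ∈ S, b ∉ Set.Icc 0 t) :
    ⨅ b ∈ S, rateJ μ t b = ⊤ := by
  simp only [iInf_eq_top]
  intro b hb
  rw [rateJ, if_neg (h b hb)]

lemma rateJ_iInf_closed {μ t : ℝ} {C : Set ℝ} (hC : IsClosed C) (ht : 0 < t)
    (hne : (C ∩ Set.Icc 0 t).Nonempty) :
    ⨅ b ∈ C, rateJ μ t b = ((μ ^ 2 * sInf (C ∩ Set.Icc 0 t) / 2 : ℝ) : EReal) := by
  have hSc : IsClosed (C ∩ Set.Icc 0 t) := hC.inter isClosed_Icc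
  have hbdd : BddBelow (C ∩ Set.Icc 0 t) := ⟨0, fun x hx => hx.2.1⟩
  have hmem : sInf (C ∩ Set.Icc 0 t) ∈ C ∩ Set.Icc 0 t := hSc.csInf_mem hne hbdd
  apply le_antisymm
  · exact (iInf₂_le (sInf (C ∩ Set.Icc 0 t)) hmem.1).trans_eq (by rw [rateJ, if_pos hmem.2])
  · apply le_iInf₂
    intro b hb
    by_cases hb2 : b ∈ Set.Icc 0 t
    · rw [rateJ, if_pos hb2]
      apply EReal.coe_le_coe_iff.2
      have hle : sInf (C ∩ Set.Icc 0 t) ≤ b := csInf_le hbdd ⟨hb, hb2⟩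
      have := mul_le_mul_of_nonneg_left hle (sq_nonneg μ)
      linarith
    · rw [rateJ, if_neg hb2]
      exact le_top

-- from s4.lean

section
variable {μ t : ℝ} {P : ℝ → Measure ℝ}

lemma hcdf_F (hcdf : ∀ r > 0, ∀ a ∈ Set.Ioc 0 t,
      P r (Set.Iic a) = ENNReal.ofReal (1 - (2 / π) *
        ∫ y in (0:ℝ)..Real.sqrt ((t - a) / a),
          Real.exp (-((μ * Real.sqrt r) ^ 2 / 2) * a * (1 + y ^ 2)) / (1 + y ^ 2)))
    {r : ℝ} (hr : 0 < r) {a : ℝ} (ha : a ∈ Set.Ioc 0 t) :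
    P r (Set.Iic a) = ENNReal.ofReal (Ffun μ t a r) := hcdf r hr a ha

lemma Ffun_t (μ t r : ℝ) (ht : 0 < t) : Ffun μ t t r = 1 := by
  unfold Ffun
  rw [sub_self, zero_div, Real.sqrt_zero, intervalIntegral.integral_same, mul_zero, sub_zero]

lemma P_Iic_t (hcdf : ∀ r > 0, ∀ a ∈ Set.Ioc 0 t,
      P r (Set.Iic a) = ENNReal.ofReal (1 - (2 / π) *
        ∫ y in (0:ℝ)..Real.sqrt ((t - a) / a),
          Real.exp (-((μ * Real.sqrt r) ^ 2 / 2) * a * (1 + y ^ 2)) / (1 + y ^ 2)))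
    (ht : 0 < t) {r : ℝ} (hr : 0 < r) : P r (Set.Iic t) = 1 := by
  rw [hcdf_F hcdf hr ⟨ht, le_refl t⟩, Ffun_t μ t r ht, ENNReal.ofReal_one]

lemma P_Ioi_t (hprob : ∀ r > 0, IsProbabilityMeasure (P r))
    (hcdf : ∀ r > 0, ∀ a ∈ Set.Ioc 0 t,
      P r (Set.Iic a) = ENNReal.ofReal (1 - (2 / π) *
        ∫ y in (0:ℝ)..Real.sqrt ((t - a) / a),
          Real.exp (-((μ * Real.sqrt r) ^ 2 / 2) * a * (1 + y ^ 2)) / (1 + y ^ 2)))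
    (ht : 0 < t) {r : ℝ} (hr : 0 < r) : P r (Set.Ioi t) = 0 := by
  haveI := hprob r hr
  rw [← Set.compl_Iic, measure_compl measurableSet_Iic (measure_ne_top _ _),
    P_Iic_t hcdf ht hr, measure_univ, tsub_self]

lemma P_Ioc (hcdf : ∀ r > 0, ∀ a ∈ Set.Ioc 0 t,
      P r (Set.Iic a) = ENNReal.ofReal (1 - (2 / π) *
        ∫ y in (0:ℝ)..Real.sqrt ((t - a) / a),
          Real.exp (-((μ * Real.sqrt r) ^ 2 / 2) * a * (1 + y ^ 2)) / (1 + y ^ 2)))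
    (hprob : ∀ r > 0, IsProbabilityMeasure (P r))
    {r : ℝ} (hr : 0 < r) {a b : ℝ} (ha : 0 < a) (hab : a ≤ b) (hbt : b ≤ t) :
    P r (Set.Ioc a b) = ENNReal.ofReal (Ffun μ t b r - Ffun μ t a r) := by
  haveI := hprob r hr
  rw [← Set.Iic_sdiff_Iic,
    measure_diff (Set.Iic_subset_Iic.2 hab) measurableSet_Iic.nullMeasurableSet (measure_ne_top _ _),
    hcdf_F hcdf hr ⟨ha, hab.trans hbt⟩, hcdf_F hcdf hr ⟨ha.trans_le hab, hbt⟩,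
    ENNReal.ofReal_sub _ (Ffun_nonneg μ t a r ha.le)]

lemma P_null (h0 : ∀ r > 0, P r (Set.Iic 0) = 0)
    (hprob : ∀ r > 0, IsProbabilityMeasure (P r))
    (hcdf : ∀ r > 0, ∀ a ∈ Set.Ioc 0 t,
      P r (Set.Iic a) = ENNReal.ofReal (1 - (2 / π) *
        ∫ y in (0:ℝ)..Real.sqrt ((t - a) / a),
          Real.exp (-((μ * Real.sqrt r) ^ 2 / 2) * a * (1 + y ^ 2)) / (1 + y ^ 2)))
    (ht : 0 < t) {r : ℝ} (hr : 0 < r) {C : Set ℝ} (hC : ∀ z ∈ C, z ∉ Set.Ioc 0 t) :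
    P r C = 0 := by
  apply measure_mono_null (t := Set.Iic 0 ∪ Set.Ioi t)
  · intro z hz
    rcases le_or_gt z 0 with h | h
    · exact Or.inl h
    · rcases le_or_gt z t with h' | h'
      · exact absurd ⟨h, h'⟩ (hC z hz)
      · exact Or.inr h'
  · exact measure_union_null (h0 r hr) (P_Ioi_t hprob hcdf ht hr)

lemma P_tail_le (h0 : ∀ r > 0, P r (Set.Iic 0) = 0)
    (hprob : ∀ r > 0, IsProbabilityMeasure (P r))
    (hcdf : ∀ r > 0, ∀ a ∈ Set.Ioc 0 t,
      P r (Set.Iic a) = ENNReal.ofReal (1 - (2 / π) *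
        ∫ y in (0:ℝ)..Real.sqrt ((t - a) / a),
          Real.exp (-((μ * Real.sqrt r) ^ 2 / 2) * a * (1 + y ^ 2)) / (1 + y ^ 2)))
    (ht : 0 < t) {r : ℝ} (hr : 0 < r) {a : ℝ} (ha : 0 < a) (hat : a ≤ t)
    {C : Set ℝ} (hC : ∀ z ∈ C, z ∈ Set.Ioc 0 t → a < z) :
    P r C ≤ ENNReal.ofReal (Real.exp (-((μ * Real.sqrt r) ^ 2 / 2 * a))) := by
  have hsub : C ⊆ (Set.Iic 0 ∪ Set.Ioi t) ∪ Set.Ioc a t := by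
    intro z hz
    rcases le_or_gt z 0 with h | h
    · exact Or.inl (Or.inl h)
    · rcases le_or_gt z t with h' | h'
      · exact Or.inr ⟨hC z hz ⟨h, h'⟩, h'⟩
      · exact Or.inl (Or.inr h')
  calc P r C ≤ P r ((Set.Iic 0 ∪ Set.Ioi t) ∪ Set.Ioc a t) := measure_mono hsub
    _ ≤ P r (Set.Iic 0 ∪ Set.Ioi t) + P r (Set.Ioc a t) := measure_union_le _ _
    _ = P r (Set.Ioc a t) := by
        rw [measure_union_null (h0 r hr) (P_Ioi_t hprob hcdf ht hr), zero_add]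
    _ = ENNReal.ofReal (Ffun μ t t r - Ffun μ t a r) := P_Ioc hcdf hprob hr ha hat le_rfl
    _ ≤ _ := by
        apply ENNReal.ofReal_le_ofReal
        rw [Ffun_t μ t r ht]
        exact one_sub_Ffun_le μ t a r ha.le

end

-- from s6.lean

lemma liminf_lower {μ t : ℝ} {P : ℝ → Measure ℝ}
    (hprob : ∀ r > 0, IsProbabilityMeasure (P r))
    (hcdf : ∀ r > 0, ∀ a ∈ Set.Ioc 0 t,
      P r (Set.Iic a) = ENNReal.ofReal (1 - (2 / π) *
        ∫ y in (0:ℝ)..Real.sqrt ((t - a) / a),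
          Real.exp (-((μ * Real.sqrt r) ^ 2 / 2) * a * (1 + y ^ 2)) / (1 + y ^ 2)))
    (hμ : μ ≠ 0) (ht : 0 < t)
    {a b δ x : ℝ} (ha : 0 < a) (hδ : 0 < δ) (hab : a * (1 + δ ^ 2) < b) (hbt : b ≤ t)
    (hx : x < -(μ ^ 2 * (a * (1 + δ ^ 2)) / 2)) {G : Set ℝ} (hsub : Set.Ioc a b ⊆ G) :
    (x : EReal) ≤ liminf (fun r : ℝ => ((1 / r : ℝ) : EReal) * eLogProb (P r G)) atTop := by
  have hμ2 : 0 < μ ^ 2 := by positivity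
  have haab : a ≤ a * (1 + δ ^ 2) := by nlinarith
  have hab' : a < b := lt_of_le_of_lt haab hab
  have hat : a < t := hab'.trans_le hbt
  have hb0 : 0 < b := ha.trans hab'
  have hL : 0 < Real.sqrt ((t - a) / a) := Real.sqrt_pos.2 (div_pos (by linarith) ha)
  set m := min δ (Real.sqrt ((t - a) / a)) with hm_def
  have hm : 0 < m := lt_min hδ hL
  have hmδ : m ≤ δ := min_le_left _ _
  have hmL : m ≤ Real.sqrt ((t - a) / a) := min_le_right _ _
  set Kc : ℝ := 2 / π * (m / (1 + m ^ 2)) with hKc_def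
  have hKc : 0 < Kc := by
    have := Real.pi_pos
    positivity
  set c1 : ℝ := μ ^ 2 * (a * (1 + δ ^ 2)) / 2 with hc1_def
  set c2 : ℝ := μ ^ 2 * b / 2 with hc2_def
  have hc12 : c1 < c2 := by
    rw [hc1_def, hc2_def]
    nlinarith
  have hxc1 : x + c1 < 0 := by linarith
  -- eventual bounds
  have hE2 : ∀ᶠ r in atTop, Real.exp (-((c2 - c1) * r)) ≤ Kc / 2 := by
    have h1 : Tendsto (fun r : ℝ => (c2 - c1) * r) atTop atTop :=
      Tendsto.const_mul_atTop (by linarith) tendsto_id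
    have h2 : Tendsto (fun r : ℝ => Real.exp (-((c2 - c1) * r))) atTop (nhds 0) :=
      Real.tendsto_exp_atBot.comp (tendsto_neg_atTop_atBot.comp h1)
    exact h2.eventually (eventually_le_nhds (by positivity))
  have hE3 : ∀ᶠ r in atTop, x + c1 ≤ Real.log (Kc / 2) * r⁻¹ := by
    have h1 : Tendsto (fun r : ℝ => Real.log (Kc / 2) * r⁻¹) atTop (nhds 0) := by
      have := tendsto_inv_atTop_zero (𝕜 := ℝ)
      have h2 := this.const_mul (Real.log (Kc / 2))
      rwa [mul_zero] at h2
    exact h1.eventually (eventually_ge_nhds hxc1)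
  have hev : ∀ᶠ r in atTop, (x : EReal)
      ≤ ((1 / r : ℝ) : EReal) * eLogProb (P r G) := by
    filter_upwards [eventually_gt_atTop (0 : ℝ), hE2, hE3] with r hr h2 h3
    haveI := hprob r hr
    have hsq : (μ * Real.sqrt r) ^ 2 = μ ^ 2 * r := sq_mul_sqrt μ r hr.le
    -- lower bound on 1 - Ffun a
    have g1 := one_sub_Ffun_ge μ t a r m ha.le hm.le hmL
    have g1' : Kc * Real.exp (-(c1 * r)) ≤ 1 - Ffun μ t a r := by
      refine le_trans ?_ g1
      rw [hKc_def, mul_assoc]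
      apply mul_le_mul_of_nonneg_left ?_ (by have := Real.pi_pos; positivity)
      apply mul_le_mul_of_nonneg_left ?_ (by positivity)
      apply Real.exp_le_exp.2
      rw [hsq, hc1_def]
      have hmδ2 : m ^ 2 ≤ δ ^ 2 := by nlinarith
      nlinarith [mul_nonneg (mul_nonneg hμ2.le hr.le) ha.le]
    -- upper bound on 1 - Ffun b
    have g2 := one_sub_Ffun_le μ t b r hb0.le
    have g2' : 1 - Ffun μ t b r ≤ Real.exp (-(c1 * r)) * (Kc / 2) := by
      have heq : -((μ * Real.sqrt r) ^ 2 / 2 * b) = -(c1 * r) + -((c2 - c1) * r) := by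
        rw [hsq, hc1_def, hc2_def]; ring
      calc 1 - Ffun μ t b r ≤ Real.exp (-((μ * Real.sqrt r) ^ 2 / 2 * b)) := g2
        _ = Real.exp (-(c1 * r)) * Real.exp (-((c2 - c1) * r)) := by
            rw [heq, Real.exp_add]
        _ ≤ Real.exp (-(c1 * r)) * (Kc / 2) :=
            mul_le_mul_of_nonneg_left h2 (Real.exp_pos _).le
    have hdiff : Real.exp (Real.log (Kc / 2) - c1 * r) ≤ Ffun μ t b r - Ffun μ t a r := by
      have : Real.exp (Real.log (Kc / 2) - c1 * r)
          = Kc / 2 * Real.exp (-(c1 * r)) := by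
        rw [sub_eq_add_neg, Real.exp_add, Real.exp_log (by positivity)]
      rw [this]
      have hrw : Kc / 2 * Real.exp (-(c1 * r))
          = Kc * Real.exp (-(c1 * r)) - Real.exp (-(c1 * r)) * (Kc / 2) := by ring
      rw [hrw]
      linarith
    have hPG : ENNReal.ofReal (Real.exp (Real.log (Kc / 2) - c1 * r)) ≤ P r G := by
      calc ENNReal.ofReal (Real.exp (Real.log (Kc / 2) - c1 * r))
          ≤ ENNReal.ofReal (Ffun μ t b r - Ffun μ t a r) := ENNReal.ofReal_le_ofReal hdiff
        _ = P r (Set.Ioc a b) := (P_Ioc hcdf hprob hr ha hab'.le hbt).symm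
        _ ≤ P r G := measure_mono hsub
    have hge := mul_eLog_ge hr hPG (measure_ne_top _ _)
    refine le_trans ?_ hge
    apply EReal.coe_le_coe_iff.2
    have : (Real.log (Kc / 2) - c1 * r) / r = Real.log (Kc / 2) * r⁻¹ - c1 := by
      field_simp
    rw [this]
    linarith
  calc (x : EReal) = liminf (fun _ : ℝ => (x : EReal)) atTop := (liminf_const _).symm
    _ ≤ _ := liminf_le_liminf hev
theorem stmt_11 (μ t : ℝ) (hμ : μ ≠ 0) (ht : 0 < t)
    (P : ℝ → Measure ℝ) (hprob : ∀ r > 0, IsProbabilityMeasure (P r))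
    (hcdf : ∀ r > 0, ∀ a ∈ Set.Ioc 0 t,
      P r (Set.Iic a) = ENNReal.ofReal (1 - (2 / π) *
        ∫ y in (0:ℝ)..Real.sqrt ((t - a) / a),
          Real.exp (-((μ * Real.sqrt r) ^ 2 / 2) * a * (1 + y ^ 2)) / (1 + y ^ 2)))
    (h0 : ∀ r > 0, P r (Set.Iic 0) = 0) :
    (∀ η : ℝ, IsCompact {b : ℝ | rateJ μ t b ≤ (η : EReal)}) ∧
    (∀ C : Set ℝ, IsClosed C →
      limsup (fun r : ℝ => ((1 / r : ℝ) : EReal) * eLogProb (P r C)) atTop ≤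
        -⨅ b ∈ C, rateJ μ t b) ∧
    (∀ G : Set ℝ, IsOpen G →
      -⨅ b ∈ G, rateJ μ t b ≤
        liminf (fun r : ℝ => ((1 / r : ℝ) : EReal) * eLogProb (P r G)) atTop) := by
  have hμ2 : 0 < μ ^ 2 := by positivity
  refine ⟨fun η => compact_sublevel μ t hμ ht η, ?_, ?_⟩
  · -- upper bound for closed sets
    intro C hC
    by_cases hne : (C ∩ Set.Icc 0 t).Nonempty
    · rw [rateJ_iInf_closed hC ht hne, ← EReal.coe_neg]
      have hbdd : BddBelow (C ∩ Set.Icc 0 t) := ⟨0, fun z hz => hz.2.1⟩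
      have hmem : sInf (C ∩ Set.Icc 0 t) ∈ C ∩ Set.Icc 0 t :=
        (hC.inter isClosed_Icc).csInf_mem hne hbdd
      set astar := sInf (C ∩ Set.Icc 0 t) with hastar_def
      by_contra hcon
      push_neg at hcon
      obtain ⟨x, hx1, hx2⟩ := EReal.exists_between_coe_real hcon
      rw [EReal.coe_lt_coe_iff] at hx1
      rcases eq_or_lt_of_le hmem.2.1 with h0' | h0'
      · -- astar = 0
        have hxpos : 0 < x := by
          rw [← h0'] at hx1
          simpa using hx1
        have hup : limsup (fun r : ℝ => ((1 / r : ℝ) : EReal) * eLogProb (P r C)) atTop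
            ≤ (0 : EReal) := by
          have hev : ∀ᶠ r in atTop,
              ((1 / r : ℝ) : EReal) * eLogProb (P r C) ≤ (0 : EReal) := by
            filter_upwards [eventually_gt_atTop (0 : ℝ)] with r hr
            haveI := hprob r hr
            exact mul_eLog_nonpos hr prob_le_one
          exact (limsup_le_limsup hev).trans_eq (limsup_const _)
        have hlt := hx2.trans_le hup
        rw [← EReal.coe_zero, EReal.coe_lt_coe_iff] at hlt
        linarith
      · -- 0 < astar
        have hxa : -(2 * x) / μ ^ 2 < astar := by
          rw [div_lt_iff₀ hμ2]
          linarith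
        have hmax : max 0 (-(2 * x) / μ ^ 2) < astar := max_lt h0' hxa
        set a'' := (max 0 (-(2 * x) / μ ^ 2) + astar) / 2 with ha''_def
        have ha''gt : max 0 (-(2 * x) / μ ^ 2) < a'' := by
          rw [ha''_def]; linarith
        have ha''1 : 0 < a'' := (le_max_left 0 _).trans_lt ha''gt
        have ha''2 : a'' < astar := by rw [ha''_def]; linarith
        have ha''t : a'' ≤ t := ha''2.le.trans hmem.2.2
        have ha''x : -(μ ^ 2 * a'' / 2) ≤ x := by
          have h1 : -(2 * x) / μ ^ 2 ≤ a'' := (le_max_right 0 _).trans ha''gt.le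
          rw [div_le_iff₀ hμ2] at h1
          nlinarith
        have hCsub : ∀ z ∈ C, z ∈ Set.Ioc 0 t → a'' < z := by
          intro z hz hzI
          have hzS : z ∈ C ∩ Set.Icc 0 t := ⟨hz, Set.Ioc_subset_Icc_self hzI⟩
          have := csInf_le hbdd hzS
          exact lt_of_lt_of_le ha''2 this
        have hev : ∀ᶠ r in atTop, ((1 / r : ℝ) : EReal) * eLogProb (P r C)
            ≤ ((-(μ ^ 2 * a'' / 2) : ℝ) : EReal) := by
          filter_upwards [eventually_gt_atTop (0 : ℝ)] with r hr
          have hP := P_tail_le h0 hprob hcdf ht hr ha''1 ha''t hCsub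
          have heq : -((μ * Real.sqrt r) ^ 2 / 2 * a'') / r = -(μ ^ 2 * a'' / 2) := by
            rw [sq_mul_sqrt μ r hr.le]
            field_simp
          exact (mul_eLog_le hr hP).trans_eq (by rw [heq])
        have hup := (limsup_le_limsup hev).trans_eq
          (limsup_const ((-(μ ^ 2 * a'' / 2) : ℝ) : EReal))
        have : limsup (fun r : ℝ => ((1 / r : ℝ) : EReal) * eLogProb (P r C)) atTop
            ≤ (x : EReal) := hup.trans (EReal.coe_le_coe_iff.2 (by linarith [ha''x]))
        exact absurd hx2 (not_lt.2 this)
    · -- C ∩ [0,t] empty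
      have hC' : ∀ z ∈ C, z ∉ Set.Icc 0 t := fun z hz h => hne ⟨z, hz, h⟩
      rw [rateJ_iInf_empty hC', EReal.neg_top]
      have hev : ∀ᶠ r in atTop,
          ((1 / r : ℝ) : EReal) * eLogProb (P r C) ≤ (⊥ : EReal) := by
        filter_upwards [eventually_gt_atTop (0 : ℝ)] with r hr
        rw [P_null h0 hprob hcdf ht hr
          (fun z hz hIoc => hC' z hz (Set.Ioc_subset_Icc_self hIoc))]
        unfold eLogProb
        rw [if_pos rfl, EReal.coe_mul_bot_of_pos (by positivity)]
      exact (limsup_le_limsup hev).trans_eq (limsup_const _)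
  · -- lower bound for open sets
    intro G hG
    rw [EReal.neg_le]
    apply le_iInf₂
    intro b hb
    rw [EReal.neg_le]
    by_cases hbI : b ∈ Set.Icc 0 t
    · rw [rateJ, if_pos hbI, ← EReal.coe_neg]
      by_contra hcon
      push_neg at hcon
      obtain ⟨x, hx1, hx2⟩ := EReal.exists_between_coe_real hcon
      rw [EReal.coe_lt_coe_iff] at hx2
      obtain ⟨γ, hγ, hball⟩ := Metric.isOpen_iff.1 hG b hb
      obtain ⟨hb0, hbt⟩ := hbI
      set bb := min t (b + γ / 2) with hbb_def
      have hbb0 : 0 < bb := lt_min ht (by linarith)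
      have hbbt : bb ≤ t := min_le_left _ _
      have hbbb : b ≤ bb := le_min hbt (by linarith)
      have hbb2 : bb ≤ b + γ / 2 := min_le_right _ _
      have hxb : b < -(2 * x) / μ ^ 2 := by
        rw [lt_div_iff₀ hμ2]
        nlinarith
      set K := min bb (-(2 * x) / μ ^ 2) with hK_def
      have hmaxK : max 0 (b - γ) < K :=
        lt_min (max_lt hbb0 (by linarith)) (max_lt (hb0.trans_lt hxb) (by linarith))
      set aa := (max 0 (b - γ) + K) / 2 with haa_def
      have haa1 : max 0 (b - γ) < aa := by rw [haa_def]; linarith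
      have haa0 : 0 < aa := (le_max_left 0 _).trans_lt haa1
      have haaK : aa < K := by rw [haa_def]; linarith
      set δ := Real.sqrt ((K - aa) / (2 * aa)) with hδ_def
      have hδpos : 0 < δ := Real.sqrt_pos.2 (div_pos (by linarith) (by linarith))
      have hδsq : δ ^ 2 = (K - aa) / (2 * aa) :=
        Real.sq_sqrt (le_of_lt (div_pos (by linarith) (by linarith)))
      have hkey : aa * (1 + δ ^ 2) = aa + (K - aa) / 2 := by
        rw [hδsq]
        field_simp
      have h1 : aa * (1 + δ ^ 2) < bb := by
        have hKbb : K ≤ bb := min_le_left _ _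
        rw [hkey]
        linarith
      have h2 : x < -(μ ^ 2 * (aa * (1 + δ ^ 2)) / 2) := by
        have hKx : K ≤ -(2 * x) / μ ^ 2 := min_le_right _ _
        have h3 : aa * (1 + δ ^ 2) < -(2 * x) / μ ^ 2 := by
          rw [hkey]
          linarith
        rw [lt_div_iff₀ hμ2] at h3
        nlinarith
      have hsub : Set.Ioc aa bb ⊆ G := by
        intro z hz
        apply hball
        rw [Metric.mem_ball, Real.dist_eq, abs_lt]
        have hz1 := hz.1
        have hz2 := hz.2
        have hbγ : b - γ ≤ max 0 (b - γ) := le_max_right _ _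
        constructor
        · linarith
        · linarith
      have hlow := liminf_lower hprob hcdf hμ ht haa0 hδpos h1 hbbt h2 hsub
      exact absurd hx1 (not_lt.2 hlow)
    · rw [rateJ, if_neg hbI, EReal.neg_top]
      exact bot_le
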